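/- Let (V, ω) be a finite-dimensional real symplectic vector space and J an ω-compatible complex structure on V. Let G be a finite group acting ℝ-linearly on V such that every group element preserves ω and commutes with J (so G acts ℂ-linearly on the complex vector space (V, J)). Suppose the representation of G on (V, J) is of real type, i.e. there exists a G-invariant real structure on (V, J) (an ℝ-linear map R₀ : V → V with R₀∘J = −J∘R₀, R₀∘R₀ = id, commuting with the G-action). Then there exists a G-invariant real structure R on (V, J) such that in addition ω(Rx, Ry) = −ω(x, y) for all x, y ∈ V. -/

import Mathlib

open Polynomial

section Aux

private lemma commute_aeval_aux {A : Type*} [Ring A] [Algebra ℝ A] {B S : A}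
    (h : B * S = S * B) (q : ℝ[X]) : B * Polynomial.aeval S q = Polynomial.aeval S q * B := by
  have hc : Commute B S := h
  induction q using Polynomial.induction_on' with
  | add p r hp hr =>
      rw [map_add, mul_add, add_mul, hp, hr]
  | monomial n a =>
      rw [Polynomial.aeval_monomial]
      have h1 : Commute B (algebraMap ℝ A a) := (Algebra.commutes a B).symm
      exact (h1.mul_right (hc.pow_right n))

private def conjAlgHom {A : Type*} [Ring A] [Algebra ℝ A] (R : A) (h : R * R = 1) :
    A →ₐ[ℝ] A where
  toFun x := R * x * R
  map_one' := by show R * 1 * R = 1; rw [mul_one, h]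
  map_mul' x y := by
    simp only [mul_assoc]
    rw [← mul_assoc R R, h, one_mul]
  map_zero' := by simp
  map_add' x y := by show R * (x + y) * R = R * x * R + R * y * R; rw [mul_add, add_mul]
  commutes' r := by
    show R * algebraMap ℝ A r * R = algebraMap ℝ A r
    rw [← Algebra.commutes r R, mul_assoc, h, mul_one]

@[simp] private lemma conjAlgHom_apply {A : Type*} [Ring A] [Algebra ℝ A] (R : A)
    (h : R * R = 1) (x : A) : conjAlgHom R h x = R * x * R := rfl

private lemma isSymmetric_aeval_aux {E : Type*} [NormedAddCommGroup E]
    [InnerProductSpace ℝ E] {S : E →ₗ[ℝ] E} (hS : S.IsSymmetric) (q : ℝ[X]) :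
    (Polynomial.aeval S q : E →ₗ[ℝ] E).IsSymmetric := by
  induction q using Polynomial.induction_on' with
  | add p r hp hr =>
      rw [map_add]; exact hp.add hr
  | monomial n a =>
      rw [Polynomial.aeval_monomial]
      intro x y
      have hpow := hS.pow n
      simp only [Module.End.mul_apply, Module.algebraMap_end_apply, real_inner_smul_left,
        real_inner_smul_right]
      rw [hpow x y]

end Aux

open scoped RealInnerProductSpace

theorem exists_invariant_real_structure_antisymplectic
    {V : Type*} [AddCommGroup V] [Module ℝ V] [FiniteDimensional ℝ V]
    {G : Type*} [Group G] [Finite G]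
    (ω : LinearMap.BilinForm ℝ V)
    (halt : ∀ x : V, ω x x = 0)
    (hnondeg : ∀ x : V, (∀ y : V, ω x y = 0) → x = 0)
    (J : V →ₗ[ℝ] V)
    (hJ : J ∘ₗ J = -LinearMap.id)
    (hcompat : ∀ x y : V, ω (J x) (J y) = ω x y)
    (hpos : ∀ x : V, x ≠ 0 → 0 < ω x (J x))
    (ρ : Representation ℝ G V)
    (hρω : ∀ (s : G) (x y : V), ω (ρ s x) (ρ s y) = ω x y)
    (hρJ : ∀ (s : G) (x : V), ρ s (J x) = J (ρ s x))
    (hreal : ∃ R₀ : V →ₗ[ℝ] V,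
      R₀ ∘ₗ J = -(J ∘ₗ R₀) ∧ R₀ ∘ₗ R₀ = LinearMap.id ∧
      ∀ s : G, R₀ ∘ₗ ρ s = ρ s ∘ₗ R₀) :
    ∃ R : V →ₗ[ℝ] V,
      R ∘ₗ J = -(J ∘ₗ R) ∧ R ∘ₗ R = LinearMap.id ∧
      (∀ s : G, R ∘ₗ ρ s = ρ s ∘ₗ R) ∧
      ∀ x y : V, ω (R x) (R y) = -ω x y := by
  classical
  obtain ⟨R₀, hR₀J, hR₀R₀, hR₀ρ⟩ := hreal
  -- pointwise versions of the hypotheses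
  have hJJ : ∀ x : V, J (J x) = -x := fun x => by
    simpa using LinearMap.ext_iff.mp hJ x
  have hanti : ∀ x y : V, ω x y = -ω y x := by
    intro x y
    have h := halt (x + y)
    simp only [map_add, LinearMap.add_apply, halt x, halt y] at h
    linarith
  have hR₀Jpt : ∀ x : V, R₀ (J x) = -J (R₀ x) := fun x => by
    simpa using LinearMap.ext_iff.mp hR₀J x
  have hJR₀pt : ∀ x : V, J (R₀ x) = -R₀ (J x) := fun x => by
    rw [hR₀Jpt, neg_neg]
  have hR₀R₀pt : ∀ x : V, R₀ (R₀ x) = x := fun x => by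
    simpa using LinearMap.ext_iff.mp hR₀R₀ x
  have hR₀ρpt : ∀ (s : G) (x : V), R₀ (ρ s x) = ρ s (R₀ x) := fun s x =>
    LinearMap.ext_iff.mp (hR₀ρ s) x
  have hρinv : ∀ (s : G) (x : V), ρ s⁻¹ (ρ s x) = x := by
    intro s x
    have : (ρ s⁻¹ * ρ s) x = x := by rw [← map_mul, inv_mul_cancel, map_one]; rfl
    simpa [Module.End.mul_apply] using this
  have hρinv' : ∀ (s : G) (x : V), ρ s (ρ s⁻¹ x) = x := by
    intro s x
    have : (ρ s * ρ s⁻¹) x = x := by rw [← map_mul, mul_inv_cancel, map_one]; rfl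
    simpa [Module.End.mul_apply] using this
  have hsym : ∀ x y : V, ω x (J y) = ω y (J x) := by
    intro x y
    calc ω x (J y) = ω (J x) (J (J y)) := (hcompat x (J y)).symm
      _ = ω (J x) (-y) := by rw [hJJ]
      _ = -ω (J x) y := by simp
      _ = ω y (J x) := by rw [hanti (J x) y, neg_neg]
  -- the inner product ⟪x, y⟫ = ω x (J y)
  let core : InnerProductSpace.Core ℝ V :=
  { inner := fun x y => ω x (J y)
    conj_inner_symm := fun x y => by simpa using hsym y x
    re_inner_nonneg := fun x => by
      rcases eq_or_ne x 0 with h | h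
      · simp [h]
      · simpa using (hpos x h).le
    add_left := fun x y z => by simp
    smul_left := fun x y r => by simp
    definite := fun x hx => by
      by_contra h
      exact (hpos x h).ne' (by simpa using hx) }
  letI : NormedAddCommGroup V := core.toNormedAddCommGroup
  letI : InnerProductSpace ℝ V := InnerProductSpace.ofCore core.toCore
  have hinner : ∀ x y : V, ⟪x, y⟫ = ω x (J y) := fun x y => rfl
  have hiJ1 : ∀ x y : V, ⟪J x, y⟫ = ω x y := fun x y => by
    rw [hinner]; exact hcompat x y
  have hiJ2 : ∀ x y : V, ⟪x, J y⟫ = -ω x y := fun x y => by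
    rw [hinner, hJJ]; simp
  have hiρ : ∀ (s : G) (x y : V), ⟪ρ s x, ρ s y⟫ = ⟪x, y⟫ := fun s x y => by
    rw [hinner, hinner, ← hρJ s y]; exact hρω s x (J y)
  have hiρ' : ∀ (s : G) (x y : V), ⟪ρ s x, y⟫ = ⟪x, ρ s⁻¹ y⟫ := fun s x y => by
    conv_lhs => rw [← hρinv' s y]
    exact hiρ s x (ρ s⁻¹ y)
  have hipos : ∀ x : V, x ≠ 0 → 0 < ⟪x, x⟫ := fun x hx => by
    rw [hinner]; exact hpos x hx
  -- the adjoint of R₀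
  set A := LinearMap.adjoint R₀ with hAdef
  have hA1 : ∀ x y : V, ⟪A x, y⟫ = ⟪x, R₀ y⟫ := fun x y =>
    LinearMap.adjoint_inner_left R₀ y x
  have hA2 : ∀ x y : V, ⟪x, A y⟫ = ⟪R₀ x, y⟫ := fun x y =>
    LinearMap.adjoint_inner_right R₀ x y
  have hAA : ∀ x : V, A (A x) = x := fun x => by
    apply ext_inner_right ℝ
    intro v
    calc ⟪A (A x), v⟫ = ⟪A x, R₀ v⟫ := hA1 _ _
      _ = ⟪x, R₀ (R₀ v)⟫ := hA1 _ _
      _ = ⟪x, v⟫ := by rw [hR₀R₀pt]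
  have hAJ : ∀ x : V, A (J x) = -J (A x) := fun x => by
    apply ext_inner_right ℝ
    intro v
    calc ⟪A (J x), v⟫ = ⟪J x, R₀ v⟫ := hA1 _ _
      _ = ω x (R₀ v) := hiJ1 _ _
      _ = -⟪x, J (R₀ v)⟫ := by rw [hiJ2, neg_neg]
      _ = -⟪x, -R₀ (J v)⟫ := by rw [hJR₀pt]
      _ = ⟪x, R₀ (J v)⟫ := by rw [inner_neg_right, neg_neg]
      _ = ⟪A x, J v⟫ := (hA1 _ _).symm
      _ = -ω (A x) v := hiJ2 _ _
      _ = -⟪J (A x), v⟫ := by rw [hiJ1]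
      _ = ⟪-J (A x), v⟫ := by rw [inner_neg_left]
  have hAρ : ∀ (s : G) (x : V), A (ρ s x) = ρ s (A x) := fun s x => by
    apply ext_inner_right ℝ
    intro v
    calc ⟪A (ρ s x), v⟫ = ⟪ρ s x, R₀ v⟫ := hA1 _ _
      _ = ⟪x, ρ s⁻¹ (R₀ v)⟫ := hiρ' s x (R₀ v)
      _ = ⟪x, R₀ (ρ s⁻¹ v)⟫ := by rw [hR₀ρpt]
      _ = ⟪A x, ρ s⁻¹ v⟫ := (hA1 _ _).symm
      _ = ⟪ρ s (A x), v⟫ := (hiρ' s (A x) v).symm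
  -- S = A ∘ R₀, a positive symmetric operator; Sinv its inverse
  set S : Module.End ℝ V := A ∘ₗ R₀ with hSdef
  set Sinv : Module.End ℝ V := R₀ ∘ₗ A with hSinvdef
  have hSapp : ∀ x : V, S x = A (R₀ x) := fun _ => rfl
  have hSinvapp : ∀ x : V, Sinv x = R₀ (A x) := fun _ => rfl
  have hSsym : (S : V →ₗ[ℝ] V).IsSymmetric := by
    intro x y
    calc ⟪S x, y⟫ = ⟪A (R₀ x), y⟫ := rfl
      _ = ⟪R₀ x, R₀ y⟫ := hA1 _ _
      _ = ⟪x, A (R₀ y)⟫ := (hA2 _ _).symm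
      _ = ⟪x, S y⟫ := rfl
  have hSinvS : ∀ x : V, Sinv (S x) = x := fun x => by
    rw [hSapp, hSinvapp, hAA, hR₀R₀pt]
  have hSSinv : ∀ x : V, S (Sinv x) = x := fun x => by
    rw [hSapp, hSinvapp, hR₀R₀pt, hAA]
  have hSJ : ∀ x : V, S (J x) = J (S x) := fun x => by
    rw [hSapp, hSapp, hR₀Jpt, map_neg, hAJ, neg_neg]
  have hSρ : ∀ (s : G) (x : V), S (ρ s x) = ρ s (S x) := fun s x => by
    rw [hSapp, hSapp, hR₀ρpt, hAρ]
  have hconjS : ∀ x : V, R₀ (S (R₀ x)) = Sinv x := fun x => by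
    rw [hSapp, hSinvapp, hR₀R₀pt]
  -- eigenbasis of S
  set n := Module.finrank ℝ V with hndef
  have hn : Module.finrank ℝ V = n := rfl
  set b := hSsym.eigenvectorBasis hn with hbdef
  set μ := hSsym.eigenvalues hn with hμdef
  have hbe : ∀ i, Module.End.HasEigenvector S (μ i) (b i) := fun i =>
    hSsym.hasEigenvector_eigenvectorBasis hn i
  have hb : ∀ i, S (b i) = μ i • b i := fun i =>
    Module.End.mem_eigenspace_iff.mp (hbe i).1
  have hbne : ∀ i, b i ≠ 0 := fun i => (hbe i).2
  have hR₀ne : ∀ x : V, x ≠ 0 → R₀ x ≠ 0 := fun x hx h0 =>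
    hx (by rw [← hR₀R₀pt x, h0, map_zero])
  have hμpos : ∀ i, 0 < μ i := by
    intro i
    have h1 : ⟪S (b i), b i⟫ = ⟪R₀ (b i), R₀ (b i)⟫ := by
      rw [hSapp]; exact hA1 _ _
    have h2 : 0 < ⟪R₀ (b i), R₀ (b i)⟫ := hipos _ (hR₀ne _ (hbne i))
    rw [hb i, real_inner_smul_left] at h1
    have h3 : 0 < ⟪b i, b i⟫ := hipos _ (hbne i)
    nlinarith
  have hbinv : ∀ i, Sinv (b i) = (μ i)⁻¹ • b i := by
    intro i
    have h := congrArg Sinv (hb i)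
    rw [hSinvS, map_smul] at h
    calc Sinv (b i) = (μ i)⁻¹ • (μ i • Sinv (b i)) := by
          rw [smul_smul, inv_mul_cancel₀ (hμpos i).ne', one_smul]
      _ = (μ i)⁻¹ • b i := by rw [← h]
  have hbeinv : ∀ i, Module.End.HasEigenvector Sinv ((μ i)⁻¹) (b i) := fun i =>
    ⟨Module.End.mem_eigenspace_iff.mpr (hbinv i), hbne i⟩
  -- the interpolation polynomial for λ ↦ λ^{-1/2}
  set t : Finset ℝ := Finset.univ.image μ ∪ Finset.univ.image (fun i => (μ i)⁻¹) with htdef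
  set q : Polynomial ℝ := Lagrange.interpolate t id (fun x => (Real.sqrt x)⁻¹) with hqdef
  have hq : ∀ c ∈ t, q.eval c = (Real.sqrt c)⁻¹ := fun c hc =>
    Lagrange.eval_interpolate_at_node _ (Set.injOn_id _) hc
  have hμt : ∀ i, μ i ∈ t := fun i =>
    Finset.mem_union_left _ (Finset.mem_image_of_mem μ (Finset.mem_univ i))
  have hμinvt : ∀ i, (μ i)⁻¹ ∈ t := fun i =>
    Finset.mem_union_right _ (Finset.mem_image_of_mem _ (Finset.mem_univ i))
  -- P = S^{-1/2}, P' = S^{1/2}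
  set P : Module.End ℝ V := Polynomial.aeval S q with hPdef
  set P' : Module.End ℝ V := Polynomial.aeval Sinv q with hP'def
  have hsqrtpos : ∀ i, 0 < Real.sqrt (μ i) := fun i => Real.sqrt_pos.mpr (hμpos i)
  have hPb : ∀ i, P (b i) = (Real.sqrt (μ i))⁻¹ • b i := fun i => by
    rw [hPdef, Module.End.aeval_apply_of_hasEigenvector (hbe i), hq _ (hμt i)]
  have hP'b : ∀ i, P' (b i) = Real.sqrt (μ i) • b i := fun i => by
    rw [hP'def, Module.End.aeval_apply_of_hasEigenvector (hbeinv i), hq _ (hμinvt i),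
      Real.sqrt_inv, inv_inv]
  -- commutation properties of P
  have hPJmul : (J : Module.End ℝ V) * P = P * J := by
    refine commute_aeval_aux ?_ q
    exact LinearMap.ext fun x => (hSJ x).symm
  have hPJ : ∀ x : V, P (J x) = J (P x) := fun x =>
    (LinearMap.ext_iff.mp hPJmul x).symm
  have hPρmul : ∀ s : G, (ρ s : Module.End ℝ V) * P = P * ρ s := by
    intro s
    refine commute_aeval_aux ?_ q
    exact LinearMap.ext fun x => (hSρ s x).symm
  have hPρ : ∀ (s : G) (x : V), P (ρ s x) = ρ s (P x) := fun s x =>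
    (LinearMap.ext_iff.mp (hPρmul s) x).symm
  have hR₀mul : (R₀ : Module.End ℝ V) * R₀ = 1 := hR₀R₀
  have hconjP : (R₀ : Module.End ℝ V) * P * R₀ = P' := by
    have h1 : conjAlgHom (R₀ : Module.End ℝ V) hR₀mul S = Sinv := by
      rw [conjAlgHom_apply]
      exact LinearMap.ext fun x => hconjS x
    have h2 := Polynomial.aeval_algHom_apply (conjAlgHom (R₀ : Module.End ℝ V) hR₀mul) S q
    rw [h1] at h2
    rw [hPdef, hP'def, h2, conjAlgHom_apply]
  have hPsym : (P : V →ₗ[ℝ] V).IsSymmetric := by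
    rw [hPdef]; exact isSymmetric_aeval_aux hSsym q
  -- key identities: P' ∘ P = 1 and P ∘ S ∘ P = 1
  have hP'P : ∀ x : V, P' (P x) = x := by
    have h : (P' * P : Module.End ℝ V) = 1 := by
      apply b.toBasis.ext
      intro i
      rw [OrthonormalBasis.coe_toBasis]
      rw [Module.End.mul_apply, hPb i, map_smul, hP'b i, smul_smul,
        inv_mul_cancel₀ (hsqrtpos i).ne', one_smul, Module.End.one_apply]
    intro x
    exact LinearMap.ext_iff.mp h x
  have hPSP : ∀ x : V, P (S (P x)) = x := by
    have h : (P * S * P : Module.End ℝ V) = 1 := by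
      apply b.toBasis.ext
      intro i
      rw [OrthonormalBasis.coe_toBasis]
      have hs : Real.sqrt (μ i) ≠ 0 := (hsqrtpos i).ne'
      have hc : (Real.sqrt (μ i))⁻¹ * μ i * (Real.sqrt (μ i))⁻¹ = 1 := by
        rw [← Real.mul_self_sqrt (hμpos i).le]
        field_simp
        rw [Real.sqrt_sq (hsqrtpos i).le]
      rw [Module.End.mul_apply, Module.End.mul_apply, hPb i, map_smul, hb i, map_smul,
        map_smul, hPb i, smul_smul, smul_smul, hc, one_smul, Module.End.one_apply]
    intro x
    exact LinearMap.ext_iff.mp h x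
  -- orthogonality of R = R₀ ∘ P
  have horth : ∀ x y : V, ⟪R₀ (P x), R₀ (P y)⟫ = ⟪x, y⟫ := by
    intro x y
    calc ⟪R₀ (P x), R₀ (P y)⟫ = ⟪P x, A (R₀ (P y))⟫ := (hA2 _ _).symm
      _ = ⟪P x, S (P y)⟫ := by rw [hSapp]
      _ = ⟪x, P (S (P y))⟫ := hPsym _ _
      _ = ⟪x, y⟫ := by rw [hPSP]
  -- conclusion
  refine ⟨R₀ ∘ₗ (P : V →ₗ[ℝ] V), ?_, ?_, ?_, ?_⟩
  · apply LinearMap.ext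
    intro x
    simp only [LinearMap.comp_apply, LinearMap.neg_apply]
    rw [hPJ, hR₀Jpt]
  · apply LinearMap.ext
    intro x
    simp only [LinearMap.comp_apply, LinearMap.id_apply]
    have h1 : R₀ (P (R₀ (P x))) = P' (P x) := LinearMap.ext_iff.mp hconjP (P x)
    rw [h1, hP'P]
  · intro s
    apply LinearMap.ext
    intro x
    simp only [LinearMap.comp_apply]
    rw [hPρ, hR₀ρpt]
  · intro x y
    simp only [LinearMap.comp_apply]
    calc ω (R₀ (P x)) (R₀ (P y)) = ⟪J (R₀ (P x)), R₀ (P y)⟫ := (hiJ1 _ _).symm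
      _ = ⟪-R₀ (J (P x)), R₀ (P y)⟫ := by rw [hJR₀pt]
      _ = -⟪R₀ (J (P x)), R₀ (P y)⟫ := by rw [inner_neg_left]
      _ = -⟪R₀ (P (J x)), R₀ (P y)⟫ := by rw [hPJ]
      _ = -⟪J x, y⟫ := by rw [horth]
      _ = -ω x y := by rw [hiJ1]
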